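/- In ℍ with metric ds² = 4dξ² + ξ⁶dθ², the distance between any two points (θ₀,ξ₀) and (θ₁,ξ₁) is at most 2ξ₀ + 2ξ₁; consequently the metric completion of ℍ adds exactly one point corresponding to the entire line ξ = 0, i.e. any two sequences (θⱼ,ξⱼ), (θⱼ',ξⱼ') with ξⱼ → 0 and ξⱼ' → 0 are equivalent Cauchy sequences. -/

import Mathlib

open Set Filter

/-- Length of a smooth path `x ↦ (θ(x), ξ(x))` in the upper half-plane model
`ℍ = {(θ,ξ) : ξ > 0}` with metric `ds² = 4dξ² + ξ⁶dθ²`. -/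
noncomputable def Hlen (γ : ℝ → ℝ × ℝ) (a b : ℝ) : ℝ :=
  ∫ x in a..b,
    Real.sqrt (4 * (deriv (fun t => (γ t).2) x) ^ 2 +
      ((γ x).2) ^ 6 * (deriv (fun t => (γ t).1) x) ^ 2)

/-- The length-metric distance in `ℍ`: infimum of lengths of `C¹` paths staying in `ξ > 0`. -/
noncomputable def Hdist (p q : ℝ × ℝ) : ℝ :=
  sInf { L : ℝ | ∃ γ : ℝ → ℝ × ℝ, ContDiff ℝ 1 γ ∧ γ 0 = p ∧ γ 1 = q ∧
    (∀ t ∈ Set.Icc (0:ℝ) 1, 0 < (γ t).2) ∧ L = Hlen γ 0 1 }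

lemma hd_mem_nonneg {p q : ℝ × ℝ} {L : ℝ}
    (hL : L ∈ { L : ℝ | ∃ γ : ℝ → ℝ × ℝ, ContDiff ℝ 1 γ ∧ γ 0 = p ∧ γ 1 = q ∧
      (∀ t ∈ Set.Icc (0:ℝ) 1, 0 < (γ t).2) ∧ L = Hlen γ 0 1 }) : 0 ≤ L := by
  obtain ⟨γ, -, -, -, -, rfl⟩ := hL
  apply intervalIntegral.integral_nonneg (by norm_num)
  intro u _
  positivity

lemma Hdist_nonneg (p q : ℝ × ℝ) : 0 ≤ Hdist p q :=
  Real.sInf_nonneg fun _ hL => hd_mem_nonneg hL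

lemma sqrt_add_le' (a b : ℝ) (ha : 0 ≤ a) (hb : 0 ≤ b) :
    Real.sqrt (a + b) ≤ Real.sqrt a + Real.sqrt b := by
  have h : Real.sqrt (a + b) ≤ Real.sqrt ((Real.sqrt a + Real.sqrt b) ^ 2) :=
    Real.sqrt_le_sqrt (by nlinarith [Real.sq_sqrt ha, Real.sq_sqrt hb, Real.sqrt_nonneg a, Real.sqrt_nonneg b, mul_nonneg (Real.sqrt_nonneg a) (Real.sqrt_nonneg b)])
  rwa [Real.sqrt_sq (by positivity)] at h

lemma key (θ₀ ξ₀ θ₁ ξ₁ : ℝ) (h₀ : 0 < ξ₀) (h₁ : 0 < ξ₁) (m : ℕ) :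
    Hdist (θ₀, ξ₀) (θ₁, ξ₁) ≤ 2 * ξ₀ + 2 * ξ₁ +
      4 * (ξ₀ ^ 3 + ξ₁ ^ 3) * |θ₁ - θ₀| / (3 * (m:ℝ) + 4) := by
  set n : ℕ := m + 1 with hn
  set c : ℝ := θ₁ - θ₀ with hc
  set ξf : ℝ → ℝ := fun t => ξ₀ * (1 - t) ^ n + ξ₁ * t ^ n with hξf
  set θf : ℝ → ℝ := fun t => θ₀ + t * c with hθf
  set γ : ℝ → ℝ × ℝ := fun t => (θf t, ξf t) with hγ
  set d : ℝ → ℝ := fun t => ξ₁ * ((n:ℝ) * t ^ m) - ξ₀ * ((n:ℝ) * (1 - t) ^ m) with hd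
  have hderξ : ∀ t : ℝ, HasDerivAt ξf (d t) t := by
    intro t
    have h1 : HasDerivAt (fun t : ℝ => ξ₀ * (1 - t) ^ n)
        (ξ₀ * ((n:ℝ) * (1 - t) ^ m * (-1))) t := by
      have := (((hasDerivAt_id t).const_sub 1).pow n).const_mul ξ₀
      simpa [hn] using this
    have h2 : HasDerivAt (fun t : ℝ => ξ₁ * t ^ n) (ξ₁ * ((n:ℝ) * t ^ m)) t := by
      have := (hasDerivAt_pow n t).const_mul ξ₁
      simpa [hn, mul_comm] using this
    have := h1.add h2
    refine this.congr_deriv ?_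
    simp only [hd]
    ring
  have hderθ : ∀ t : ℝ, HasDerivAt θf c t := by
    intro t
    have := ((hasDerivAt_id t).mul_const c).const_add θ₀
    simpa [hθf] using this
  have hcd : ContDiff ℝ 1 γ := by
    rw [hγ]
    apply ContDiff.prodMk
    · rw [hθf]; exact contDiff_const.add (contDiff_id.mul contDiff_const)
    · rw [hξf]
      exact (contDiff_const.mul ((contDiff_const.sub contDiff_id).pow n)).add
        (contDiff_const.mul (contDiff_id.pow n))
  have hpos : ∀ t ∈ Set.Icc (0:ℝ) 1, 0 < (γ t).2 := by
    intro t ht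
    obtain ⟨ht0, ht1⟩ := ht
    simp only [hγ, hξf]
    rcases lt_or_eq_of_le ht1 with h | h
    · have h1 : 0 < (1 - t) ^ n := pow_pos (by linarith) n
      have h2 : 0 ≤ ξ₁ * t ^ n := by positivity
      nlinarith
    · have h1 : 0 < t ^ n := by rw [h]; norm_num
      have h2 : 0 ≤ ξ₀ * (1 - t) ^ n := by
        have h3 : (0:ℝ) ≤ 1 - t := by linarith
        positivity
      nlinarith
  have hmem : Hlen γ 0 1 ∈ { L : ℝ | ∃ γ : ℝ → ℝ × ℝ, ContDiff ℝ 1 γ ∧ γ 0 = (θ₀, ξ₀) ∧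
      γ 1 = (θ₁, ξ₁) ∧ (∀ t ∈ Set.Icc (0:ℝ) 1, 0 < (γ t).2) ∧ L = Hlen γ 0 1 } := by
    refine ⟨γ, hcd, ?_, ?_, hpos, rfl⟩
    · simp only [hγ, hθf, hξf]
      refine Prod.ext ?_ ?_ <;> simp [hn]
    · simp only [hγ, hθf, hξf]
      refine Prod.ext ?_ ?_ <;> simp [hn, hc]
  have hle1 : Hdist (θ₀, ξ₀) (θ₁, ξ₁) ≤ Hlen γ 0 1 :=
    csInf_le ⟨0, fun L hL => hd_mem_nonneg hL⟩ hmem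
  set g : ℝ → ℝ := fun x => 2 * ((n:ℝ) * ξ₀ * (1 - x) ^ m + (n:ℝ) * ξ₁ * x ^ m) +
      4 * (ξ₀ ^ 3 * (1 - x) ^ (3 * m + 3) + ξ₁ ^ 3 * x ^ (3 * m + 3)) * |c| with hg
  have hlen_eq : Hlen γ 0 1 = ∫ x in (0:ℝ)..1,
      Real.sqrt (4 * d x ^ 2 + ξf x ^ 6 * c ^ 2) := by
    unfold Hlen
    apply intervalIntegral.integral_congr
    intro x _
    have e2 : (fun t => (γ t).2) = ξf := by funext t; rw [hγ]
    have e1 : (fun t => (γ t).1) = θf := by funext t; rw [hγ]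
    simp only [e2, e1, (hderξ x).deriv, (hderθ x).deriv, hγ]
  have hint1 : IntervalIntegrable (fun x => Real.sqrt (4 * d x ^ 2 + ξf x ^ 6 * c ^ 2))
      MeasureTheory.volume 0 1 := by
    have hcd' : Continuous d := by rw [hd]; fun_prop
    have hcξ : Continuous ξf := by rw [hξf]; fun_prop
    exact (Real.continuous_sqrt.comp
      ((continuous_const.mul (hcd'.pow 2)).add
        ((hcξ.pow 6).mul continuous_const))).intervalIntegrable _ _
  have hint2 : IntervalIntegrable g MeasureTheory.volume 0 1 := by
    apply Continuous.intervalIntegrable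
    rw [hg]
    fun_prop
  have hptwise : ∀ x ∈ Set.Icc (0:ℝ) 1,
      Real.sqrt (4 * d x ^ 2 + ξf x ^ 6 * c ^ 2) ≤ g x := by
    intro x hx
    obtain ⟨hx0, hx1⟩ := hx
    have hx1' : (0:ℝ) ≤ 1 - x := by linarith
    have hξnn : 0 ≤ ξf x := by simp only [hξf]; positivity
    have h1 : Real.sqrt (4 * d x ^ 2 + ξf x ^ 6 * c ^ 2) ≤
        Real.sqrt (4 * d x ^ 2) + Real.sqrt (ξf x ^ 6 * c ^ 2) :=
      sqrt_add_le' _ _ (by positivity) (by positivity)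
    have h2 : Real.sqrt (4 * d x ^ 2) = 2 * |d x| := by
      rw [show 4 * d x ^ 2 = (2 * d x) ^ 2 by ring, Real.sqrt_sq_eq_abs, abs_mul]
      norm_num
    have h3 : Real.sqrt (ξf x ^ 6 * c ^ 2) = ξf x ^ 3 * |c| := by
      rw [show ξf x ^ 6 * c ^ 2 = (ξf x ^ 3 * c) ^ 2 by ring, Real.sqrt_sq_eq_abs, abs_mul,
        abs_of_nonneg (by positivity : (0:ℝ) ≤ ξf x ^ 3)]
    have p1 : (0:ℝ) ≤ x ^ m := by positivity
    have p2 : (0:ℝ) ≤ (1 - x) ^ m := by positivity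
    have hn0 : (0:ℝ) ≤ (n:ℝ) := by positivity
    have h4 : |d x| ≤ (n:ℝ) * ξ₀ * (1 - x) ^ m + (n:ℝ) * ξ₁ * x ^ m := by
      rw [abs_le]
      constructor
      · simp only [hd]
        nlinarith [mul_nonneg (mul_nonneg hn0 h₁.le) p1, mul_nonneg (mul_nonneg hn0 h₀.le) p2]
      · simp only [hd]
        nlinarith [mul_nonneg (mul_nonneg hn0 h₁.le) p1, mul_nonneg (mul_nonneg hn0 h₀.le) p2]
    have ha : (0:ℝ) ≤ ξ₀ * (1 - x) ^ n := by positivity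
    have hb : (0:ℝ) ≤ ξ₁ * x ^ n := by positivity
    have hcube : (ξ₀ * (1 - x) ^ n + ξ₁ * x ^ n) ^ 3 ≤
        4 * ((ξ₀ * (1 - x) ^ n) ^ 3 + (ξ₁ * x ^ n) ^ 3) := by
      nlinarith [mul_nonneg (add_nonneg ha hb) (sq_nonneg (ξ₀ * (1 - x) ^ n - ξ₁ * x ^ n)), mul_nonneg ha hb]
    have ea : (ξ₀ * (1 - x) ^ n) ^ 3 = ξ₀ ^ 3 * (1 - x) ^ (3 * m + 3) := by
      rw [mul_pow, ← pow_mul, show n * 3 = 3 * m + 3 by omega]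
    have eb : (ξ₁ * x ^ n) ^ 3 = ξ₁ ^ 3 * x ^ (3 * m + 3) := by
      rw [mul_pow, ← pow_mul, show n * 3 = 3 * m + 3 by omega]
    have h5 : ξf x ^ 3 ≤ 4 * (ξ₀ ^ 3 * (1 - x) ^ (3 * m + 3) + ξ₁ ^ 3 * x ^ (3 * m + 3)) := by
      simp only [hξf]
      calc (ξ₀ * (1 - x) ^ n + ξ₁ * x ^ n) ^ 3
          ≤ 4 * ((ξ₀ * (1 - x) ^ n) ^ 3 + (ξ₁ * x ^ n) ^ 3) := hcube
        _ = 4 * (ξ₀ ^ 3 * (1 - x) ^ (3 * m + 3) + ξ₁ ^ 3 * x ^ (3 * m + 3)) := by rw [ea, eb]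
    have h6 : ξf x ^ 3 * |c| ≤
        4 * (ξ₀ ^ 3 * (1 - x) ^ (3 * m + 3) + ξ₁ ^ 3 * x ^ (3 * m + 3)) * |c| :=
      mul_le_mul_of_nonneg_right h5 (abs_nonneg c)
    simp only [hg]
    calc Real.sqrt (4 * d x ^ 2 + ξf x ^ 6 * c ^ 2)
        ≤ Real.sqrt (4 * d x ^ 2) + Real.sqrt (ξf x ^ 6 * c ^ 2) := h1
      _ = 2 * |d x| + ξf x ^ 3 * |c| := by rw [h2, h3]
      _ ≤ 2 * ((n:ℝ) * ξ₀ * (1 - x) ^ m + (n:ℝ) * ξ₁ * x ^ m) +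
          4 * (ξ₀ ^ 3 * (1 - x) ^ (3 * m + 3) + ξ₁ ^ 3 * x ^ (3 * m + 3)) * |c| := by
        have := h6
        linarith
  have hmono : (∫ x in (0:ℝ)..1, Real.sqrt (4 * d x ^ 2 + ξf x ^ 6 * c ^ 2)) ≤
      ∫ x in (0:ℝ)..1, g x :=
    intervalIntegral.integral_mono_on (by norm_num) hint1 hint2 hptwise
  have I1 : ∀ k : ℕ, (∫ x in (0:ℝ)..1, x ^ k) = 1 / ((k:ℝ) + 1) := by
    intro k
    rw [integral_pow]
    simp
  have I2 : ∀ k : ℕ, (∫ x in (0:ℝ)..1, (1 - x) ^ k) = 1 / ((k:ℝ) + 1) := by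
    intro k
    have h := intervalIntegral.integral_comp_sub_left (a := (0:ℝ)) (b := 1)
      (fun x => x ^ k) 1
    simp only [sub_zero, sub_self] at h
    rw [h, I1]
  have c1 : IntervalIntegrable (fun x : ℝ => (2 * (n:ℝ) * ξ₀) * (1 - x) ^ m)
      MeasureTheory.volume 0 1 := by apply Continuous.intervalIntegrable; fun_prop
  have c2 : IntervalIntegrable (fun x : ℝ => (2 * (n:ℝ) * ξ₁) * x ^ m)
      MeasureTheory.volume 0 1 := by apply Continuous.intervalIntegrable; fun_prop
  have c3 : IntervalIntegrable (fun x : ℝ => (4 * ξ₀ ^ 3 * |c|) * (1 - x) ^ (3 * m + 3))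
      MeasureTheory.volume 0 1 := by apply Continuous.intervalIntegrable; fun_prop
  have c4 : IntervalIntegrable (fun x : ℝ => (4 * ξ₁ ^ 3 * |c|) * x ^ (3 * m + 3))
      MeasureTheory.volume 0 1 := by apply Continuous.intervalIntegrable; fun_prop
  have hsplit : (∫ x in (0:ℝ)..1, g x) = ∫ x in (0:ℝ)..1,
      ((2 * (n:ℝ) * ξ₀) * (1 - x) ^ m + ((2 * (n:ℝ) * ξ₁) * x ^ m +
        ((4 * ξ₀ ^ 3 * |c|) * (1 - x) ^ (3 * m + 3) + (4 * ξ₁ ^ 3 * |c|) * x ^ (3 * m + 3)))) := by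
    apply intervalIntegral.integral_congr
    intro x _
    simp only [hg]
    ring
  have hIg : (∫ x in (0:ℝ)..1, g x) = (2 * (n:ℝ) * ξ₀) * (1 / ((m:ℝ) + 1)) +
      ((2 * (n:ℝ) * ξ₁) * (1 / ((m:ℝ) + 1)) +
        ((4 * ξ₀ ^ 3 * |c|) * (1 / (((3 * m + 3 : ℕ):ℝ) + 1)) +
          (4 * ξ₁ ^ 3 * |c|) * (1 / (((3 * m + 3 : ℕ):ℝ) + 1)))) := by
    rw [hsplit, intervalIntegral.integral_add c1 (c2.add (c3.add c4)),
      intervalIntegral.integral_add c2 (c3.add c4),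
      intervalIntegral.integral_add c3 c4,
      intervalIntegral.integral_const_mul, intervalIntegral.integral_const_mul,
      intervalIntegral.integral_const_mul, intervalIntegral.integral_const_mul,
      I1, I1, I2, I2]
  have hnn : (n:ℝ) = (m:ℝ) + 1 := by rw [hn]; push_cast; ring
  have hfin : (∫ x in (0:ℝ)..1, g x) = 2 * ξ₀ + 2 * ξ₁ +
      4 * (ξ₀ ^ 3 + ξ₁ ^ 3) * |c| / (3 * (m:ℝ) + 4) := by
    rw [hIg, hnn]
    have hm1 : (m:ℝ) + 1 ≠ 0 := by positivity
    have hm4 : 3 * (m:ℝ) + 4 ≠ 0 := by positivity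
    push_cast
    field_simp
    ring
  calc Hdist (θ₀, ξ₀) (θ₁, ξ₁) ≤ Hlen γ 0 1 := hle1
    _ = ∫ x in (0:ℝ)..1, Real.sqrt (4 * d x ^ 2 + ξf x ^ 6 * c ^ 2) := hlen_eq
    _ ≤ ∫ x in (0:ℝ)..1, g x := hmono
    _ = 2 * ξ₀ + 2 * ξ₁ + 4 * (ξ₀ ^ 3 + ξ₁ ^ 3) * |c| / (3 * (m:ℝ) + 4) := hfin

/-- The distance between two points of `ℍ` is at most `2ξ₀ + 2ξ₁`; consequently any two
sequences whose heights tend to `0` are equivalent Cauchy sequences: the completion adds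
a single point for the whole line `ξ = 0`. -/
theorem stmt1 :
    (∀ θ₀ ξ₀ θ₁ ξ₁ : ℝ, 0 < ξ₀ → 0 < ξ₁ →
      Hdist (θ₀, ξ₀) (θ₁, ξ₁) ≤ 2 * ξ₀ + 2 * ξ₁) ∧
    (∀ θ ξ θ' ξ' : ℕ → ℝ, (∀ j, 0 < ξ j) → (∀ j, 0 < ξ' j) →
      Tendsto ξ atTop (nhds 0) → Tendsto ξ' atTop (nhds 0) →
      Tendsto (fun j => Hdist (θ j, ξ j) (θ' j, ξ' j)) atTop (nhds 0)) := by
  have main : ∀ θ₀ ξ₀ θ₁ ξ₁ : ℝ, 0 < ξ₀ → 0 < ξ₁ →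
      Hdist (θ₀, ξ₀) (θ₁, ξ₁) ≤ 2 * ξ₀ + 2 * ξ₁ := by
    intro θ₀ ξ₀ θ₁ ξ₁ h₀ h₁
    set K : ℝ := 4 * (ξ₀ ^ 3 + ξ₁ ^ 3) * |θ₁ - θ₀| with hK
    have h1 : Tendsto (fun j : ℕ => (3 * (j:ℝ) + 4)) atTop atTop :=
      tendsto_atTop_add_const_right _ 4
        (Tendsto.const_mul_atTop (by norm_num) tendsto_natCast_atTop_atTop)
    have h2 : Tendsto (fun j : ℕ => K / (3 * (j:ℝ) + 4)) atTop (nhds 0) :=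
      Tendsto.div_atTop tendsto_const_nhds h1
    have h3 : Tendsto (fun j : ℕ => 2 * ξ₀ + 2 * ξ₁ + K / (3 * (j:ℝ) + 4)) atTop
        (nhds (2 * ξ₀ + 2 * ξ₁)) := by
      have := tendsto_const_nhds (x := 2 * ξ₀ + 2 * ξ₁) (f := atTop (α := ℕ)) |>.add h2
      simpa using this
    exact ge_of_tendsto h3 (Eventually.of_forall fun j => key θ₀ ξ₀ θ₁ ξ₁ h₀ h₁ j)
  refine ⟨main, ?_⟩
  intro θ ξ θ' ξ' hξ hξ' hto hto'
  apply squeeze_zero (fun j => Hdist_nonneg _ _)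
    (fun j => main _ _ _ _ (hξ j) (hξ' j))
  have : Tendsto (fun j => 2 * ξ j + 2 * ξ' j) atTop (nhds (2 * 0 + 2 * 0)) :=
    (hto.const_mul 2).add (hto'.const_mul 2)
  simpa using this
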